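/- Let H > 0 and define Φ : ℝ × (0, 1/H) → ℝ by Φ(t,r) = e^{−Ht}·(1 − H²r²)^{−1/2}. Then for all t ∈ ℝ and 0 < r < 1/H, Φ satisfies (1 − H²r²)^{−1}·∂²_t Φ(t,r) − (1/r)·∂_r( r·(1 − H²r²)·∂_r Φ(t,r) ) + 2H²·Φ(t,r) = H²·Φ(t,r). -/

import Mathlib

/-- `Φ₁(t,r) = e^{-Ht}·(1 − H²r²)^{-1/2}` is an eigenfunction with eigenvalue
`H²` of the uncharged spherically symmetric conformally invariant wave
operator `F(r)⁻¹ ∂ₜ² − (1/r) ∂ᵣ(r F(r) ∂ᵣ) + 2H²` on de Sitter space in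
static coordinates, where `F(r) = 1 − H²r²`. -/
theorem eigenmode_conformal_wave_operator (H : ℝ) (hH : 0 < H) (Φ : ℝ → ℝ → ℝ)
    (hΦ : ∀ t r, Φ t r = Real.exp (-(H * t)) * (1 - H^2 * r^2) ^ (-(1/2) : ℝ)) :
    ∀ t r : ℝ, 0 < r → r < 1/H →
      (1 - H^2 * r^2)⁻¹ * deriv (fun s => deriv (fun s' => Φ s' r) s) t
        - (1/r) * deriv (fun ρ => ρ * (1 - H^2 * ρ^2) * deriv (Φ t) ρ) r
        + 2 * H^2 * Φ t r
      = H^2 * Φ t r := by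
  intro t r hr hrH
  have hF : 0 < 1 - H^2 * r^2 := by
    have h1 : r * H < 1 := (lt_div_iff₀ hH).mp hrH
    nlinarith [mul_pos hH hr]
  -- derivative of inner function 1 - H²ρ²
  have hinner : ∀ x : ℝ, HasDerivAt (fun ρ : ℝ => 1 - H^2 * ρ^2) (-(2 * H^2 * x)) x := by
    intro x
    have := ((hasDerivAt_pow 2 x).const_mul (H^2)).const_sub 1
    simpa using this.congr_deriv (by ring)
  -- derivative of rpow composition
  have hrpow : ∀ (p : ℝ) (x : ℝ), 0 < 1 - H^2 * x^2 →
      HasDerivAt (fun ρ : ℝ => (1 - H^2 * ρ^2) ^ p)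
        (p * (1 - H^2 * x^2) ^ (p - 1) * (-(2 * H^2 * x))) x := by
    intro p x hx
    exact (Real.hasDerivAt_rpow_const (Or.inl hx.ne')).comp x (hinner x)
  -- time derivatives
  have htime : ∀ (s ρ : ℝ), HasDerivAt (fun s' => Φ s' ρ) (-H * Φ s ρ) s := by
    intro s ρ
    have h1 : HasDerivAt (fun s' : ℝ => -(H * s')) (-H) s := by
      exact (((hasDerivAt_id s).const_mul H).neg).congr_deriv (by ring)
    have h2 := (Real.hasDerivAt_exp (-(H * s))).comp s h1
    have h3 := h2.mul_const ((1 - H^2 * ρ^2) ^ (-(1/2) : ℝ))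
    have h4 : (fun s' => Φ s' ρ) = fun s' => Real.exp (-(H * s')) * (1 - H^2 * ρ^2) ^ (-(1/2) : ℝ) := by
      funext s'; exact hΦ s' ρ
    rw [h4]
    exact h3.congr_deriv (by rw [hΦ s ρ]; ring)
  have hT : deriv (fun s => deriv (fun s' => Φ s' r) s) t = H^2 * Φ t r := by
    have heq : (fun s => deriv (fun s' => Φ s' r) s) = fun s => -H * Φ s r := by
      funext s; exact (htime s r).deriv
    rw [heq]
    have := ((htime t r).const_mul (-H)).deriv
    rw [this]; ring
  -- radial part
  set e := Real.exp (-(H * t)) with he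
  set F := 1 - H^2 * r^2 with hFdef
  set a := F ^ (-(1/2) : ℝ) with ha
  set b := F ^ (-(3/2) : ℝ) with hb
  have hab : F * b = a := by
    have h := (Real.rpow_add hF 1 (-(3/2))).symm
    rw [Real.rpow_one, show (1:ℝ) + -(3/2) = -(1/2) by norm_num] at h
    exact h
  -- deriv of Φ t in ρ near r
  have hradF : ∀ x : ℝ, 0 < 1 - H^2 * x^2 →
      HasDerivAt (Φ t) (e * (H^2 * x * (1 - H^2 * x^2) ^ (-(3/2) : ℝ))) x := by
    intro x hx
    have h1 := (hrpow (-(1/2) : ℝ) x hx).const_mul e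
    have h2 : (fun ρ => Φ t ρ) = fun ρ => e * (1 - H^2 * ρ^2) ^ (-(1/2) : ℝ) := by
      funext ρ; exact hΦ t ρ
    rw [show Φ t = fun ρ => Φ t ρ from rfl, h2]
    have : (-(1/2) : ℝ) - 1 = -(3/2) := by norm_num
    exact h1.congr_deriv (by rw [this]; ring)
  -- the inner radial function agrees near r with a nice function
  have hU : ∀ᶠ ρ in nhds r, (0:ℝ) < 1 - H^2 * ρ^2 := by
    have hcont : Continuous fun ρ : ℝ => 1 - H^2 * ρ^2 := by continuity
    have hopen : IsOpen {ρ : ℝ | 0 < 1 - H^2 * ρ^2} := isOpen_lt continuous_const hcont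
    exact hopen.mem_nhds hF
  have hEq : (fun ρ => ρ * (1 - H^2 * ρ^2) * deriv (Φ t) ρ) =ᶠ[nhds r]
      (fun ρ => e * H^2 * ρ^2 * (1 - H^2 * ρ^2) ^ (-(1/2) : ℝ)) := by
    filter_upwards [hU] with ρ hρ
    rw [(hradF ρ hρ).deriv]
    have h := (Real.rpow_add hρ 1 (-(3/2))).symm
    rw [Real.rpow_one, show (1:ℝ) + -(3/2) = -(1/2) by norm_num] at h
    linear_combination e * H^2 * ρ^2 * h
  have hRderiv : deriv (fun ρ => ρ * (1 - H^2 * ρ^2) * deriv (Φ t) ρ) r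
      = e * H^2 * (2 * r * a + r^2 * ((-(1/2) : ℝ) * b * (-(2 * H^2 * r)))) := by
    rw [hEq.deriv_eq]
    have h1 : HasDerivAt (fun ρ : ℝ => ρ^2) (2 * r) r := by
      simpa using hasDerivAt_pow 2 r
    have h2 := hrpow (-(1/2) : ℝ) r hF
    have h3 : HasDerivAt (fun ρ => e * H^2 * (ρ^2 * (1 - H^2 * ρ^2) ^ (-(1/2) : ℝ))) _ r :=
      (h1.mul h2).const_mul (e * H^2)
    have h4 : (fun ρ => e * H^2 * ρ^2 * (1 - H^2 * ρ^2) ^ (-(1/2) : ℝ))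
        = fun ρ => e * H^2 * (ρ^2 * (1 - H^2 * ρ^2) ^ (-(1/2) : ℝ)) := by
      funext ρ; ring
    rw [h4, h3.deriv]
    have : (-(1/2) : ℝ) - 1 = -(3/2) := by norm_num
    rw [this]
  rw [hT, hRderiv, hΦ t r, ← hFdef, ← ha, ← he]
  have hFne : F ≠ 0 := hF.ne'
  have hrne : r ≠ 0 := hr.ne'
  field_simp
  linear_combination (-(e*H^2*r^2)) * hab
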